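/- Let the graded polynomial ring R = C[x,y,z,w] have variables of weights 2,3,3,4. Then the sixth Veronese subalgebra R^{(6)} is generated as a C-algebra by x^3, xw, w^3, y^2, yz, z^2, of weights 1,1,2,1,1,1 in R^{(6)}, and the kernel of the corresponding surjection C[a,b,u,c,d,e] → R^{(6)} (weights 1,1,2,1,1,1) is generated by the two elements a·u - b^3 and c·e - d^2, of degrees 3 and 2 respectively. -/
import Mathlib


open MvPolynomial

/-- Weights of the variables of `R = ℂ[x,y,z,w]` for `ℙ(2,3,3,4)`. -/
def w2334 : Fin 4 → ℕ := ![2, 3, 3, 4]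

/-- The map `ℂ[a,b,u,c,d,e] → ℂ[x,y,z,w]` sending `a,b,u,c,d,e` to
`x³, xw, w³, y², yz, z²`. -/
noncomputable def ver2334 : MvPolynomial (Fin 6) ℂ →ₐ[ℂ] MvPolynomial (Fin 4) ℂ :=
  aeval ![X 0 ^ 3, X 0 * X 3, X 3 ^ 3, X 1 ^ 2, X 1 * X 2, X 2 ^ 2]

noncomputable abbrev II : Ideal (MvPolynomial (Fin 6) ℂ) :=
  Ideal.span {X 0 * X 2 - X 1 ^ 3, X 3 * X 5 - X 4 ^ 2}

/-- The exponent map on monomials induced by `ver2334`. -/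
noncomputable def EE (m : Fin 6 →₀ ℕ) : Fin 4 →₀ ℕ :=
  Finsupp.equivFunOnFinite.symm ![3 * m 0 + m 1, 2 * m 3 + m 4, m 4 + 2 * m 5, m 1 + 3 * m 2]

@[simp] lemma EE_apply_0 (m : Fin 6 →₀ ℕ) : EE m 0 = 3 * m 0 + m 1 := rfl
@[simp] lemma EE_apply_1 (m : Fin 6 →₀ ℕ) : EE m 1 = 2 * m 3 + m 4 := rfl
@[simp] lemma EE_apply_2 (m : Fin 6 →₀ ℕ) : EE m 2 = m 4 + 2 * m 5 := rfl
@[simp] lemma EE_apply_3 (m : Fin 6 →₀ ℕ) : EE m 3 = m 1 + 3 * m 2 := rfl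

@[simp] lemma ver_X0 : ver2334 (X 0) = (X 0 : MvPolynomial (Fin 4) ℂ) ^ 3 := by
  rw [ver2334, aeval_X]; rfl
@[simp] lemma ver_X1 : ver2334 (X 1) = (X 0 : MvPolynomial (Fin 4) ℂ) * X 3 := by
  rw [ver2334, aeval_X]; rfl
@[simp] lemma ver_X2 : ver2334 (X 2) = (X 3 : MvPolynomial (Fin 4) ℂ) ^ 3 := by
  rw [ver2334, aeval_X]; rfl
@[simp] lemma ver_X3 : ver2334 (X 3) = (X 1 : MvPolynomial (Fin 4) ℂ) ^ 2 := by
  rw [ver2334, aeval_X]; rfl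
@[simp] lemma ver_X4 : ver2334 (X 4) = (X 1 : MvPolynomial (Fin 4) ℂ) * X 2 := by
  rw [ver2334, aeval_X]; rfl
@[simp] lemma ver_X5 : ver2334 (X 5) = (X 2 : MvPolynomial (Fin 4) ℂ) ^ 2 := by
  rw [ver2334, aeval_X]; rfl

lemma mon6 (m : Fin 6 →₀ ℕ) (c : ℂ) :
    monomial m c
      = C c * (X 0 ^ m 0 * X 1 ^ m 1 * X 2 ^ m 2 * X 3 ^ m 3 * X 4 ^ m 4 * X 5 ^ m 5) := by
  have hm : m = Finsupp.single 0 (m 0) + Finsupp.single 1 (m 1) + Finsupp.single 2 (m 2)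
      + Finsupp.single 3 (m 3) + Finsupp.single 4 (m 4) + Finsupp.single 5 (m 5) := by
    ext i
    fin_cases i <;> simp [Finsupp.single_apply]
  conv_lhs => rw [hm]
  simp only [X_pow_eq_monomial, monomial_mul, C_mul_monomial, mul_one]

lemma mon4 (m : Fin 4 →₀ ℕ) (c : ℂ) :
    monomial m c = C c * (X 0 ^ m 0 * X 1 ^ m 1 * X 2 ^ m 2 * X 3 ^ m 3) := by
  have hm : m = Finsupp.single 0 (m 0) + Finsupp.single 1 (m 1) + Finsupp.single 2 (m 2)
      + Finsupp.single 3 (m 3) := by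
    ext i
    fin_cases i <;> simp [Finsupp.single_apply]
  conv_lhs => rw [hm]
  simp only [X_pow_eq_monomial, monomial_mul, C_mul_monomial, mul_one]

lemma ver_monomial (m : Fin 6 →₀ ℕ) (c : ℂ) :
    ver2334 (monomial m c) = monomial (EE m) c := by
  rw [mon6, mon4 (EE m) c]
  simp only [map_mul, map_pow, ver_X0, ver_X1, ver_X2, ver_X3, ver_X4, ver_X5, EE_apply_0,
    EE_apply_1, EE_apply_2, EE_apply_3]
  rw [show ver2334 (C c) = C c from aeval_C _ c]
  ring

lemma weight4 (f : Fin 4 →₀ ℕ) :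
    Finsupp.weight w2334 f = 2 * f 0 + 3 * f 1 + 3 * f 2 + 4 * f 3 := by
  rw [Finsupp.weight_apply, Finsupp.sum_fintype _ _ (fun i => by simp)]
  simp [Fin.sum_univ_four, w2334, mul_comm]

lemma lemA (N : ℕ) : ∀ i j k i' j' k' : ℕ, i + i' ≤ N → 3*i + j = 3*i' + j' →
    j + 3*k = j' + 3*k' →
    (X 0:MvPolynomial (Fin 6) ℂ)^i * X 1^j * X 2^k - X 0^i' * X 1^j' * X 2^k' ∈ II := by
  induction N with
  | zero =>
    intro i j k i' j' k' hN h1 h2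
    obtain ⟨rfl, rfl, rfl⟩ : i = i' ∧ j = j' ∧ k = k' := by omega
    simp
  | succ N ih =>
    intro i j k i' j' k' hN h1 h2
    by_cases hik : 0 < i ∧ 0 < k
    · obtain ⟨i₀, rfl⟩ : ∃ i₀, i = i₀ + 1 := ⟨i - 1, by omega⟩
      obtain ⟨k₀, rfl⟩ : ∃ k₀, k = k₀ + 1 := ⟨k - 1, by omega⟩
      have key : (X 0:MvPolynomial (Fin 6) ℂ)^(i₀+1) * X 1^j * X 2^(k₀+1)
          - X 0^i' * X 1^j' * X 2^k'
          = (X 0 * X 2 - X 1^3) * (X 0^i₀ * X 1^j * X 2^k₀)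
            + (X 0^i₀ * X 1^(j+3) * X 2^k₀ - X 0^i' * X 1^j' * X 2^k') := by ring
      rw [key]
      exact Ideal.add_mem _
        (Ideal.mul_mem_right _ _ (Ideal.subset_span (by simp)))
        (ih i₀ (j+3) k₀ i' j' k' (by omega) (by omega) (by omega))
    · by_cases hik' : 0 < i' ∧ 0 < k'
      · obtain ⟨i₀, rfl⟩ : ∃ i₀, i' = i₀ + 1 := ⟨i' - 1, by omega⟩
        obtain ⟨k₀, rfl⟩ : ∃ k₀, k' = k₀ + 1 := ⟨k' - 1, by omega⟩
        have key : (X 0:MvPolynomial (Fin 6) ℂ)^i * X 1^j * X 2^k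
            - X 0^(i₀+1) * X 1^j' * X 2^(k₀+1)
            = -((X 0 * X 2 - X 1^3) * (X 0^i₀ * X 1^j' * X 2^k₀))
              + (X 0^i * X 1^j * X 2^k - X 0^i₀ * X 1^(j'+3) * X 2^k₀) := by ring
        rw [key]
        exact Ideal.add_mem _
          (neg_mem (Ideal.mul_mem_right _ _ (Ideal.subset_span (by simp))))
          (ih i j k i₀ (j'+3) k₀ (by omega) (by omega) (by omega))
      · obtain ⟨rfl, rfl, rfl⟩ : i = i' ∧ j = j' ∧ k = k' := by omega
        simp

lemma lemB (N : ℕ) : ∀ l m n l' m' n' : ℕ, m + m' ≤ N → 2*l + m = 2*l' + m' →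
    m + 2*n = m' + 2*n' →
    (X 3:MvPolynomial (Fin 6) ℂ)^l * X 4^m * X 5^n - X 3^l' * X 4^m' * X 5^n' ∈ II := by
  induction N with
  | zero =>
    intro l m n l' m' n' hN h1 h2
    obtain ⟨rfl, rfl, rfl⟩ : l = l' ∧ m = m' ∧ n = n' := by omega
    simp
  | succ N ih =>
    intro l m n l' m' n' hN h1 h2
    by_cases hm : 2 ≤ m
    · obtain ⟨m₀, rfl⟩ : ∃ m₀, m = m₀ + 2 := ⟨m - 2, by omega⟩
      have key : (X 3:MvPolynomial (Fin 6) ℂ)^l * X 4^(m₀+2) * X 5^n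
          - X 3^l' * X 4^m' * X 5^n'
          = -((X 3 * X 5 - X 4^2) * (X 3^l * X 4^m₀ * X 5^n))
            + (X 3^(l+1) * X 4^m₀ * X 5^(n+1) - X 3^l' * X 4^m' * X 5^n') := by ring
      rw [key]
      exact Ideal.add_mem _
        (neg_mem (Ideal.mul_mem_right _ _ (Ideal.subset_span (by simp))))
        (ih (l+1) m₀ (n+1) l' m' n' (by omega) (by omega) (by omega))
    · by_cases hm' : 2 ≤ m'
      · obtain ⟨m₀, rfl⟩ : ∃ m₀, m' = m₀ + 2 := ⟨m' - 2, by omega⟩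
        have key : (X 3:MvPolynomial (Fin 6) ℂ)^l * X 4^m * X 5^n
            - X 3^l' * X 4^(m₀+2) * X 5^n'
            = (X 3 * X 5 - X 4^2) * (X 3^l' * X 4^m₀ * X 5^n')
              + (X 3^l * X 4^m * X 5^n - X 3^(l'+1) * X 4^m₀ * X 5^(n'+1)) := by ring
        rw [key]
        exact Ideal.add_mem _
          (Ideal.mul_mem_right _ _ (Ideal.subset_span (by simp)))
          (ih l m n (l'+1) m₀ (n'+1) (by omega) (by omega) (by omega))
      · obtain ⟨rfl, rfl, rfl⟩ : l = l' ∧ m = m' ∧ n = n' := by omega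
        simp

lemma binom (m m' : Fin 6 →₀ ℕ) (h : EE m = EE m') :
    (monomial m 1 - monomial m' 1 : MvPolynomial (Fin 6) ℂ) ∈ II := by
  have h0 := DFunLike.congr_fun h 0
  have h1 := DFunLike.congr_fun h 1
  have h2 := DFunLike.congr_fun h 2
  have h3 := DFunLike.congr_fun h 3
  simp only [EE_apply_0, EE_apply_1, EE_apply_2, EE_apply_3] at h0 h1 h2 h3
  rw [mon6, mon6, map_one, one_mul, one_mul]
  have key : (X 0 ^ m 0 * X 1 ^ m 1 * X 2 ^ m 2 * X 3 ^ m 3 * X 4 ^ m 4 * X 5 ^ m 5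
        : MvPolynomial (Fin 6) ℂ)
      - X 0 ^ m' 0 * X 1 ^ m' 1 * X 2 ^ m' 2 * X 3 ^ m' 3 * X 4 ^ m' 4 * X 5 ^ m' 5
      = (X 0 ^ m 0 * X 1 ^ m 1 * X 2 ^ m 2 - X 0 ^ m' 0 * X 1 ^ m' 1 * X 2 ^ m' 2)
          * (X 3 ^ m 3 * X 4 ^ m 4 * X 5 ^ m 5)
        + (X 0 ^ m' 0 * X 1 ^ m' 1 * X 2 ^ m' 2)
          * (X 3 ^ m 3 * X 4 ^ m 4 * X 5 ^ m 5 - X 3 ^ m' 3 * X 4 ^ m' 4 * X 5 ^ m' 5) := by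
    ring
  rw [key]
  exact Ideal.add_mem _
    (Ideal.mul_mem_right _ _
      (lemA (m 0 + m' 0) (m 0) (m 1) (m 2) (m' 0) (m' 1) (m' 2) le_rfl (by omega) (by omega)))
    (Ideal.mul_mem_left _ _
      (lemB (m 4 + m' 4) (m 3) (m 4) (m 5) (m' 3) (m' 4) (m' 5) le_rfl (by omega) (by omega)))

lemma ver_eq_sum (p : MvPolynomial (Fin 6) ℂ) :
    ver2334 p = ∑ m ∈ p.support, monomial (EE m) (coeff m p) := by
  conv_lhs => rw [p.as_sum]
  rw [map_sum]
  exact Finset.sum_congr rfl fun m _ => ver_monomial m _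

lemma coeff_ver (p : MvPolynomial (Fin 6) ℂ) (f : Fin 4 →₀ ℕ) :
    coeff f (ver2334 p) = ∑ m ∈ p.support.filter (fun m => EE m = f), coeff m p := by
  rw [ver_eq_sum]
  rw [show coeff f (∑ m ∈ p.support, monomial (EE m) (coeff m p))
      = ∑ m ∈ p.support, coeff f (monomial (EE m) (coeff m p)) from map_sum (lcoeff ℂ f) _ _]
  rw [Finset.sum_filter]
  exact Finset.sum_congr rfl fun m _ => by rw [coeff_monomial]

lemma ker_le (N : ℕ) : ∀ p : MvPolynomial (Fin 6) ℂ, p.support.card ≤ N →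
    ver2334 p = 0 → p ∈ II := by
  induction N with
  | zero =>
    intro p hp _
    have : p = 0 := support_eq_empty.mp (Finset.card_eq_zero.mp (le_antisymm hp (Nat.zero_le _)))
    simp [this]
  | succ N ih =>
    intro p hp hver
    rcases eq_or_ne p 0 with rfl | hne
    · exact Ideal.zero_mem _
    obtain ⟨m, hm⟩ := support_nonempty.mpr hne
    set S := p.support.filter (fun m' => EE m' = EE m) with hSdef
    have hmS : m ∈ S := Finset.mem_filter.mpr ⟨hm, rfl⟩
    have hsum : ∑ m' ∈ S, coeff m' p = 0 := by
      have h := coeff_ver p (EE m)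
      rw [hver] at h
      simpa [hSdef] using h.symm
    set q := p - ∑ m' ∈ S, C (coeff m' p) * ((monomial m' 1 : MvPolynomial (Fin 6) ℂ)
      - monomial m 1) with hqdef
    have hcoefq : ∀ f, coeff f q = if f ∈ S then 0 else coeff f p := by
      intro f
      rw [hqdef, coeff_sub, coeff_sum]
      simp only [coeff_C_mul, coeff_sub, coeff_monomial, mul_sub, mul_ite, mul_one, mul_zero]
      rw [Finset.sum_sub_distrib, Finset.sum_ite_eq' S f (fun m' => coeff m' p)]
      by_cases hmf : m = f
      · subst hmf
        rw [if_pos hmS, if_pos hmS,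
          Finset.sum_congr rfl (fun m' _ => if_pos rfl :
            ∀ m' ∈ S, (if m = m then coeff m' p else 0) = coeff m' p), hsum]
        ring
      · rw [Finset.sum_congr rfl (fun m' _ => if_neg hmf :
            ∀ m' ∈ S, (if m = f then coeff m' p else 0) = 0), Finset.sum_const_zero, sub_zero]
        by_cases hfS : f ∈ S
        · simp [hfS]
        · simp [hfS]
    have hsupp : q.support ⊆ p.support \ S := by
      intro f hf
      rw [mem_support_iff, hcoefq] at hf
      by_cases hfS : f ∈ S
      · simp [hfS] at hf
      · rw [if_neg hfS] at hf
        exact Finset.mem_sdiff.mpr ⟨mem_support_iff.mpr hf, hfS⟩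
    have hcard : q.support.card ≤ N := by
      have h1 : S ⊆ p.support := Finset.filter_subset _ _
      have h2 := Finset.card_le_card hsupp
      rw [Finset.card_sdiff_of_subset h1] at h2
      have hS1 : 1 ≤ S.card := Finset.card_pos.mpr ⟨m, hmS⟩
      omega
    have hverq : ver2334 q = 0 := by
      rw [hqdef, map_sub, hver, map_sum, zero_sub, neg_eq_zero]
      refine Finset.sum_eq_zero fun m' hm' => ?_
      rw [map_mul, map_sub, ver_monomial, ver_monomial, (Finset.mem_filter.mp hm').2]
      simp
    have hp' : p = q + ∑ m' ∈ S, C (coeff m' p) * ((monomial m' 1 : MvPolynomial (Fin 6) ℂ)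
        - monomial m 1) := by
      rw [hqdef]; ring
    rw [hp']
    exact Ideal.add_mem _ (ih q hcard hverq)
      (Ideal.sum_mem _ fun m' hm' =>
        Ideal.mul_mem_left _ _ (binom m' m (Finset.mem_filter.mp hm').2))

lemma hom_X03 : IsWeightedHomogeneous w2334 ((X 0 : MvPolynomial (Fin 4) ℂ) ^ 3) (6 * 1) := by
  rw [X_pow_eq_monomial]
  exact isWeightedHomogeneous_monomial _ _ _ (by rw [weight4]; simp [Finsupp.single_apply])

lemma hom_X0X3 : IsWeightedHomogeneous w2334 ((X 0 : MvPolynomial (Fin 4) ℂ) * X 3) (6 * 1) := by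
  rw [← pow_one (X 0 : MvPolynomial (Fin 4) ℂ), ← pow_one (X 3 : MvPolynomial (Fin 4) ℂ),
    X_pow_eq_monomial, X_pow_eq_monomial, monomial_mul, one_mul]
  exact isWeightedHomogeneous_monomial _ _ _ (by rw [weight4]; simp [Finsupp.single_apply])

lemma hom_X33 : IsWeightedHomogeneous w2334 ((X 3 : MvPolynomial (Fin 4) ℂ) ^ 3) (6 * 2) := by
  rw [X_pow_eq_monomial]
  exact isWeightedHomogeneous_monomial _ _ _ (by rw [weight4]; simp [Finsupp.single_apply])

lemma hom_X12 : IsWeightedHomogeneous w2334 ((X 1 : MvPolynomial (Fin 4) ℂ) ^ 2) (6 * 1) := by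
  rw [X_pow_eq_monomial]
  exact isWeightedHomogeneous_monomial _ _ _ (by rw [weight4]; simp [Finsupp.single_apply])

lemma hom_X1X2 : IsWeightedHomogeneous w2334 ((X 1 : MvPolynomial (Fin 4) ℂ) * X 2) (6 * 1) := by
  rw [← pow_one (X 1 : MvPolynomial (Fin 4) ℂ), ← pow_one (X 2 : MvPolynomial (Fin 4) ℂ),
    X_pow_eq_monomial, X_pow_eq_monomial, monomial_mul, one_mul]
  exact isWeightedHomogeneous_monomial _ _ _ (by rw [weight4]; simp [Finsupp.single_apply])

lemma hom_X22 : IsWeightedHomogeneous w2334 ((X 2 : MvPolynomial (Fin 4) ℂ) ^ 2) (6 * 1) := by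
  rw [X_pow_eq_monomial]
  exact isWeightedHomogeneous_monomial _ _ _ (by rw [weight4]; simp [Finsupp.single_apply])

lemma range_eq : Subalgebra.toSubmodule ver2334.range =
    ⨆ n : ℕ, weightedHomogeneousSubmodule ℂ w2334 (6 * n) := by
  refine le_antisymm ?_ ?_
  · rintro x hx
    rw [Subalgebra.mem_toSubmodule, AlgHom.mem_range] at hx
    obtain ⟨p, rfl⟩ := hx
    rw [ver_eq_sum]
    refine Submodule.sum_mem _ fun m _ => ?_
    refine Submodule.mem_iSup_of_mem (m 0 + m 1 + 2 * m 2 + m 3 + m 4 + m 5) ?_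
    rw [mem_weightedHomogeneousSubmodule]
    refine isWeightedHomogeneous_monomial _ _ _ ?_
    rw [weight4]
    simp only [EE_apply_0, EE_apply_1, EE_apply_2, EE_apply_3]
    ring
  · refine iSup_le fun n => ?_
    intro p hp
    rw [mem_weightedHomogeneousSubmodule] at hp
    rw [Subalgebra.mem_toSubmodule]
    rw [p.as_sum]
    refine Subalgebra.sum_mem _ fun m hm => ?_
    have hw : 2 * m 0 + 3 * m 1 + 3 * m 2 + 4 * m 3 = 6 * n := by
      have h := hp (mem_support_iff.mp hm)
      rwa [weight4] at h
    set m' : Fin 6 →₀ ℕ := Finsupp.equivFunOnFinite.symm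
      ![m 0 / 3, m 0 % 3, (m 3 - m 0 % 3) / 3, m 1 / 2, m 1 % 2, (m 2 - m 1 % 2) / 2] with hm'
    have hEE : EE m' = m := by
      ext i
      fin_cases i
      · show 3 * (m 0 / 3) + m 0 % 3 = m 0; omega
      · show 2 * (m 1 / 2) + m 1 % 2 = m 1; omega
      · show m 1 % 2 + 2 * ((m 2 - m 1 % 2) / 2) = m 2; omega
      · show m 0 % 3 + 3 * ((m 3 - m 0 % 3) / 3) = m 3; omega
    rw [AlgHom.mem_range]
    exact ⟨monomial m' (coeff m p), by rw [ver_monomial, hEE]⟩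

lemma ker_eq : RingHom.ker (ver2334 : MvPolynomial (Fin 6) ℂ →+* MvPolynomial (Fin 4) ℂ) =
    Ideal.span {X 0 * X 2 - X 1 ^ 3, X 3 * X 5 - X 4 ^ 2} := by
  refine le_antisymm ?_ ?_
  · intro p hp
    rw [RingHom.mem_ker] at hp
    exact ker_le p.support.card p le_rfl hp
  · rw [Ideal.span_le]
    rintro x hx
    simp only [Set.mem_insert_iff, Set.mem_singleton_iff] at hx
    rcases hx with rfl | rfl <;>
    · rw [SetLike.mem_coe, RingHom.mem_ker]
      show ver2334 _ = 0
      rw [map_sub, map_mul, map_pow]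
      simp only [ver_X0, ver_X1, ver_X2, ver_X3, ver_X4, ver_X5]
      ring

/-- `ℙ(2,3,3,4)`: the sixth Veronese subalgebra `R⁽⁶⁾` of `R = ℂ[x,y,z,w]`
(weights `2,3,3,4`) is generated by `x³, xw, w³, y², yz, z²`, which are
weighted homogeneous of degrees `6·1, 6·1, 6·2, 6·1, 6·1, 6·1` (i.e. of
weights `1,1,2,1,1,1` in `R⁽⁶⁾`), and the kernel of the corresponding
presentation `ℂ[a,b,u,c,d,e] → R⁽⁶⁾` is generated by the two elements
`a·u - b³` and `c·e - d²`, of degrees `3` and `2` respectively. -/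
theorem veronese_2334 :
    IsWeightedHomogeneous w2334 ((X 0 : MvPolynomial (Fin 4) ℂ) ^ 3) (6 * 1) ∧
    IsWeightedHomogeneous w2334 ((X 0 : MvPolynomial (Fin 4) ℂ) * X 3) (6 * 1) ∧
    IsWeightedHomogeneous w2334 ((X 3 : MvPolynomial (Fin 4) ℂ) ^ 3) (6 * 2) ∧
    IsWeightedHomogeneous w2334 ((X 1 : MvPolynomial (Fin 4) ℂ) ^ 2) (6 * 1) ∧
    IsWeightedHomogeneous w2334 ((X 1 : MvPolynomial (Fin 4) ℂ) * X 2) (6 * 1) ∧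
    IsWeightedHomogeneous w2334 ((X 2 : MvPolynomial (Fin 4) ℂ) ^ 2) (6 * 1) ∧
    (Subalgebra.toSubmodule ver2334.range =
      ⨆ n : ℕ, weightedHomogeneousSubmodule ℂ w2334 (6 * n)) ∧
    RingHom.ker (ver2334 : MvPolynomial (Fin 6) ℂ →+* MvPolynomial (Fin 4) ℂ) =
      Ideal.span {X 0 * X 2 - X 1 ^ 3, X 3 * X 5 - X 4 ^ 2} := by
  exact ⟨hom_X03, hom_X0X3, hom_X33, hom_X12, hom_X1X2, hom_X22, range_eq, ker_eq⟩
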